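/- Let H = ⟨xH_1, yH_2⟩ be a gluing of numerical semigroups H_1, H_2. Then PF(H) = {xf + yf' + xy : f ∈ PF(H_1), f' ∈ PF(H_2)}; consequently t(H) = t(H_1)·t(H_2) and F(H) = xF(H_1) + yF(H_2) + xy. -/

import Mathlib

/-- A numerical semigroup, viewed as a set of integers: a set of nonnegative
integers containing 0, closed under addition, with finite complement in ℕ. -/
def IsNumericalSemigroup (S : Set ℤ) : Prop :=
  (∀ x ∈ S, 0 ≤ x) ∧ 0 ∈ S ∧ (∀ a ∈ S, ∀ b ∈ S, a + b ∈ S) ∧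
    {z : ℤ | 0 ≤ z ∧ z ∉ S}.Finite

/-- The genus: the number of nonnegative integers not in `S`. -/
noncomputable def genus (S : Set ℤ) : ℕ := {z : ℤ | 0 ≤ z ∧ z ∉ S}.ncard

/-- The Frobenius number: the largest integer not in `S`. -/
noncomputable def frob (S : Set ℤ) : ℤ := sSup {z : ℤ | z ∉ S}

/-- The set of pseudo-Frobenius numbers. -/
def PF (S : Set ℤ) : Set ℤ := {x : ℤ | x ∉ S ∧ ∀ h ∈ S, h ≠ 0 → x + h ∈ S}

/-- The type: the number of pseudo-Frobenius numbers. -/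
noncomputable def typ (S : Set ℤ) : ℕ := (PF S).ncard

/-- The multiplicity: the smallest nonzero element of `S`. -/
noncomputable def mult (S : Set ℤ) : ℤ := sInf {z : ℤ | z ∈ S ∧ z ≠ 0}

/-- The Apéry set of `S` with respect to `n`. -/
def apery (S : Set ℤ) (n : ℤ) : Set ℤ := {s ∈ S | s - n ∉ S}

/-- The dual `H* = M - M` of the maximal ideal `M = S \ {0}`. -/
def dual (S : Set ℤ) : Set ℤ :=
  {z : ℤ | ∀ m ∈ S, m ≠ 0 → z + m ∈ S ∧ z + m ≠ 0}

/-- Almost symmetric: `2 g(S) = F(S) + t(S)`. -/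
def AlmostSymmetric (S : Set ℤ) : Prop := 2 * (genus S : ℤ) = frob S + (typ S : ℤ)

/-- Symmetric: `2 g(S) = F(S) + 1`. -/
def SymmetricNS (S : Set ℤ) : Prop := 2 * (genus S : ℤ) = frob S + 1

/-- Pseudo-symmetric: `2 g(S) = F(S) + 2`. -/
def PseudoSymmetric (S : Set ℤ) : Prop := 2 * (genus S : ℤ) = frob S + 2

/-- The set of minimal generators of `S`: nonzero elements not expressible as the
sum of two nonzero elements of `S`. -/
def minGens (S : Set ℤ) : Set ℤ :=
  {x ∈ S | x ≠ 0 ∧ ∀ a ∈ S, ∀ b ∈ S, a ≠ 0 → b ≠ 0 → x ≠ a + b}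

/-- The embedding dimension: the number of minimal generators. -/
noncomputable def embdim (S : Set ℤ) : ℕ := (minGens S).ncard

/-- The gluing `⟨x S₁, y S₂⟩` of two numerical semigroups. -/
def glue (x y : ℤ) (S₁ S₂ : Set ℤ) : Set ℤ :=
  {z : ℤ | ∃ a ∈ S₁, ∃ b ∈ S₂, z = x * a + y * b}
namespace Stmt18Aux

variable {S : Set ℤ}

lemma nsmul_mem (h : IsNumericalSemigroup S) {a : ℤ} (ha : a ∈ S) :
    ∀ k : ℤ, 0 ≤ k → k * a ∈ S := by
  intro k hk
  refine Int.le_induction (motive := fun k _ => k * a ∈ S) (m := 0) ?_ ?_ k hk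
  · simpa using h.2.1
  · intro n hn ih
    have := h.2.2.1 _ ih _ ha
    simpa [add_mul, one_mul] using this

lemma comp_nonempty (h : IsNumericalSemigroup S) : {z : ℤ | z ∉ S}.Nonempty :=
  ⟨-1, fun hm => by have := h.1 _ hm; omega⟩

lemma comp_bddAbove (h : IsNumericalSemigroup S) : BddAbove {z : ℤ | z ∉ S} := by
  obtain ⟨B, hB⟩ := h.2.2.2.bddAbove
  refine ⟨max B 0, fun z hz => ?_⟩
  by_cases h0 : 0 ≤ z
  · exact le_trans (hB ⟨h0, hz⟩) (le_max_left _ _)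
  · exact le_trans (le_of_lt (not_le.mp h0)) (le_max_right _ _)

lemma le_frob (h : IsNumericalSemigroup S) {z : ℤ} (hz : z ∉ S) : z ≤ frob S :=
  le_csSup (comp_bddAbove h) hz

lemma mem_of_frob_lt (h : IsNumericalSemigroup S) {z : ℤ} (hz : frob S < z) : z ∈ S := by
  by_contra hc; exact absurd (le_frob h hc) (not_le.mpr hz)

lemma frob_not_mem (h : IsNumericalSemigroup S) : frob S ∉ S :=
  Int.csSup_mem (comp_nonempty h) (comp_bddAbove h)

lemma neg_one_le_frob (h : IsNumericalSemigroup S) : (-1 : ℤ) ≤ frob S :=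
  le_frob h (fun hm => by have := h.1 _ hm; omega)

lemma frob_mem_PF (h : IsNumericalSemigroup S) : frob S ∈ PF S := by
  refine ⟨frob_not_mem h, fun m hm hm0 => ?_⟩
  exact mem_of_frob_lt h (by have := h.1 _ hm; omega)

lemma PF_finite (h : IsNumericalSemigroup S) : (PF S).Finite := by
  apply Set.Finite.subset (Set.finite_Icc (-(frob S + 2)) (frob S))
  rintro z ⟨hz1, hz2⟩
  have hm : frob S + 2 ∈ S := mem_of_frob_lt h (by omega)
  have hm0 : frob S + 2 ≠ 0 := by have := neg_one_le_frob h; omega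
  have := h.1 _ (hz2 _ hm hm0)
  exact ⟨by omega, le_frob h hz1⟩

end Stmt18Aux
open Stmt18Aux in
theorem stmt18 (S₁ S₂ : Set ℤ) (h₁ : IsNumericalSemigroup S₁) (h₂ : IsNumericalSemigroup S₂)
    (x y : ℤ) (hy : y ∈ S₁) (hy' : y ∉ minGens S₁)
    (hx : x ∈ S₂) (hx' : x ∉ minGens S₂) (hcop : Int.gcd x y = 1) :
    PF (glue x y S₁ S₂) =
        {z : ℤ | ∃ f ∈ PF S₁, ∃ f' ∈ PF S₂, z = x * f + y * f' + x * y} ∧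
      typ (glue x y S₁ S₂) = typ S₁ * typ S₂ ∧
      frob (glue x y S₁ S₂) = x * frob S₁ + y * frob S₂ + x * y := by
  have hx0 : 0 ≤ x := h₂.1 x hx
  have hy0 : 0 ≤ y := h₁.1 y hy
  have hx1 : 1 ≤ x := by
    rcases eq_or_lt_of_le hx0 with h0 | h0
    · exfalso
      rw [← h0] at hcop
      have hy1 : y = 1 := by simp only [Int.gcd_zero_left] at hcop; omega
      subst hy1
      exact hy' ⟨hy, one_ne_zero, fun a ha b hb ha0 hb0 => by
        have := h₁.1 a ha; have := h₁.1 b hb; omega⟩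
    · omega
  have hy1 : 1 ≤ y := by
    rcases eq_or_lt_of_le hy0 with h0 | h0
    · exfalso
      rw [← h0] at hcop
      have hx2 : x = 1 := by simp only [Int.gcd_zero_right] at hcop; omega
      subst hx2
      exact hx' ⟨hx, one_ne_zero, fun a ha b hb ha0 hb0 => by
        have := h₂.1 a ha; have := h₂.1 b hb; omega⟩
    · omega
  have hco : IsCoprime x y := Int.isCoprime_iff_gcd_eq_one.mpr hcop
  -- representation lemma
  have hrep : ∀ a b a' b' : ℤ, x * a + y * b = x * a' + y * b' →
      ∃ t : ℤ, a' = a + t * y ∧ b' = b - t * x := by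
    intro a b a' b' h
    have hdvd : y ∣ (a' - a) := by
      refine hco.symm.dvd_of_dvd_mul_left ⟨b - b', ?_⟩
      linear_combination -h
    obtain ⟨t, ht⟩ := hdvd
    refine ⟨t, by linarith, ?_⟩
    have hyne : y ≠ 0 := by omega
    have : y * (b - b') = y * (t * x) := by linear_combination h + x * ht
    have := mul_left_cancel₀ hyne this
    linarith
  -- PF equality
  have hPF : PF (glue x y S₁ S₂) =
      {z : ℤ | ∃ f ∈ PF S₁, ∃ f' ∈ PF S₂, z = x * f + y * f' + x * y} := by
    ext z
    constructor
    · rintro ⟨hzH, hzPF⟩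
      have hxyH : x * y ∈ glue x y S₁ S₂ := ⟨y, hy, 0, h₂.2.1, by ring⟩
      have hxy0 : x * y ≠ 0 := by positivity
      obtain ⟨a, ha, b, hb, heq⟩ := hzPF _ hxyH hxy0
      have hfnot : a - y ∉ S₁ := fun hfS => hzH ⟨a - y, hfS, b, hb, by linarith⟩
      have hf'not : b - x ∉ S₂ := fun hfS => hzH ⟨a, ha, b - x, hfS, by linarith⟩
      refine ⟨a - y, ⟨hfnot, ?_⟩, b - x, ⟨hf'not, ?_⟩, by linarith⟩
      · intro s hs hs0
        have hsS : x * s ∈ glue x y S₁ S₂ := ⟨s, hs, 0, h₂.2.1, by ring⟩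
        have hs1 : 1 ≤ s := by have := h₁.1 s hs; omega
        have hxs0 : x * s ≠ 0 := by positivity
        obtain ⟨a', ha', b', hb', heq'⟩ := hzPF _ hsS hxs0
        have hcomb : x * (a + s - y) + y * b = x * a' + y * b' := by
          linear_combination heq' - heq
        obtain ⟨t, hta, htb⟩ := hrep _ _ _ _ hcomb
        by_cases ht : t ≤ 0
        · have hmem := h₁.2.2.1 _ ha' _ (nsmul_mem h₁ hy (-t) (by omega))
          have he : (a - y) + s = a' + -t * y := by linear_combination -hta
          rw [he]; exact hmem
        · exfalso
          apply hf'not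
          have hmem := h₂.2.2.1 _ hb' _ (nsmul_mem h₂ hx (t - 1) (by omega))
          have he : b - x = b' + (t - 1) * x := by linear_combination -htb
          rw [he]; exact hmem
      · intro s hs hs0
        have hsS : y * s ∈ glue x y S₁ S₂ := ⟨0, h₁.2.1, s, hs, by ring⟩
        have hs1 : 1 ≤ s := by have := h₂.1 s hs; omega
        have hys0 : y * s ≠ 0 := by positivity
        obtain ⟨a', ha', b', hb', heq'⟩ := hzPF _ hsS hys0
        have hcomb : x * (a - y) + y * (b + s) = x * a' + y * b' := by
          linear_combination heq' - heq
        obtain ⟨t, hta, htb⟩ := hrep _ _ _ _ hcomb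
        by_cases ht : t ≤ 0
        · exfalso
          apply hfnot
          have hmem := h₁.2.2.1 _ ha' _ (nsmul_mem h₁ hy (-t) (by omega))
          have he : a - y = a' + -t * y := by linear_combination -hta
          rw [he]; exact hmem
        · have hmem := h₂.2.2.1 _ hb' _ (nsmul_mem h₂ hx (t - 1) (by omega))
          have he : (b - x) + s = b' + (t - 1) * x := by linear_combination -htb
          rw [he]; exact hmem
    · rintro ⟨f, ⟨hf1, hf2⟩, f', ⟨hf'1, hf'2⟩, rfl⟩
      constructor
      · rintro ⟨a, ha, b, hb, heq⟩
        have hcomb : x * (f + y) + y * f' = x * a + y * b := by linear_combination heq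
        obtain ⟨t, hta, htb⟩ := hrep _ _ _ _ hcomb
        by_cases ht : 0 ≤ t
        · apply hf'1
          have hmem := h₂.2.2.1 _ hb _ (nsmul_mem h₂ hx t ht)
          have he : f' = b + t * x := by linear_combination -htb
          rw [he]; exact hmem
        · apply hf1
          have hmem := h₁.2.2.1 _ ha _ (nsmul_mem h₁ hy (-1 - t) (by omega))
          have he : f = a + (-1 - t) * y := by linear_combination -hta
          rw [he]; exact hmem
      · rintro _ ⟨a, ha, b, hb, rfl⟩ hne
        by_cases haz : a = 0
        · subst haz
          have hb0 : b ≠ 0 := by rintro rfl; exact hne (by ring)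
          exact ⟨f + y, hf2 y hy (by omega), f' + b, hf'2 b hb hb0, by ring⟩
        · refine ⟨f + a, hf2 a ha haz, f' + x + b, ?_, by ring⟩
          exact h₂.2.2.1 _ (hf'2 x hx (by omega)) _ hb
  refine ⟨hPF, ?_, ?_⟩
  · -- type formula
    have himg : {z : ℤ | ∃ f ∈ PF S₁, ∃ f' ∈ PF S₂, z = x * f + y * f' + x * y} =
        (fun p : ℤ × ℤ => x * p.1 + y * p.2 + x * y) '' (PF S₁ ×ˢ PF S₂) := by
      ext z
      constructor
      · rintro ⟨f, hf, f', hf', rfl⟩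
        exact ⟨(f, f'), ⟨hf, hf'⟩, rfl⟩
      · rintro ⟨⟨f, f'⟩, ⟨hf, hf'⟩, rfl⟩
        exact ⟨f, hf, f', hf', rfl⟩
    have hinj : Set.InjOn (fun p : ℤ × ℤ => x * p.1 + y * p.2 + x * y) (PF S₁ ×ˢ PF S₂) := by
      rintro ⟨f, f'⟩ ⟨hf, hf'⟩ ⟨g, g'⟩ ⟨hg, hg'⟩ hfg
      simp only at hfg hf hf' hg hg'
      have hcomb : x * f + y * f' = x * g + y * g' := by linarith
      obtain ⟨t, hta, htb⟩ := hrep _ _ _ _ hcomb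
      rcases lt_trichotomy t 0 with ht | ht | ht
      · exfalso
        apply hf.1
        have hmem := h₁.2.2.1 _ (hg.2 y hy (by omega)) _ (nsmul_mem h₁ hy (-t - 1) (by omega))
        have he : f = (g + y) + (-t - 1) * y := by linear_combination -hta
        rw [he]; exact hmem
      · subst ht
        have : g = f ∧ g' = f' := ⟨by linarith, by linarith⟩
        simp [Prod.ext_iff]
        exact ⟨this.1.symm, this.2.symm⟩
      · exfalso
        apply hg.1
        have hmem := h₁.2.2.1 _ (hf.2 y hy (by omega)) _ (nsmul_mem h₁ hy (t - 1) (by omega))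
        have he : g = (f + y) + (t - 1) * y := by linear_combination hta
        rw [he]; exact hmem
    rw [typ, hPF, himg, Set.ncard_image_of_injOn hinj]
    rw [typ, typ, ← Nat.card_coe_set_eq, ← Nat.card_coe_set_eq,
      ← Nat.card_coe_set_eq, Nat.card_congr (Equiv.Set.prod _ _), Nat.card_prod]
  · -- Frobenius formula
    set M : ℤ := x * frob S₁ + y * frob S₂ + x * y with hM
    have hMnot : M ∉ glue x y S₁ S₂ := by
      have hMM : M ∈ PF (glue x y S₁ S₂) := by
        rw [hPF]; exact ⟨_, frob_mem_PF h₁, _, frob_mem_PF h₂, rfl⟩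
      exact hMM.1
    have hMbig : ∀ z : ℤ, M < z → z ∈ glue x y S₁ S₂ := by
      intro z hz
      obtain ⟨u, v, huv⟩ := hco
      set r : ℤ := (z * v - frob S₂ - 1) % x with hr
      set q : ℤ := (z * v - frob S₂ - 1) / x with hq'
      have hdm := Int.mul_ediv_add_emod (z * v - frob S₂ - 1) x
      have hmod : 0 ≤ r := Int.emod_nonneg _ (by omega)
      have hmod2 : r < x := Int.emod_lt_of_pos _ (by omega)
      set b : ℤ := frob S₂ + 1 + r with hb
      have hbS : b ∈ S₂ := mem_of_frob_lt h₂ (by omega)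
      have hq : z * v - b = x * q := by
        rw [hb, hr, hq']
        linarith [hdm]
      set a : ℤ := z * u + y * q with ha
      have hza : z = x * a + y * b := by
        rw [ha]
        linear_combination (-z) * huv + y * hq
      have hbound : y * b ≤ y * (frob S₂ + x) := by
        apply mul_le_mul_of_nonneg_left _ hy0
        omega
      have hxa : x * frob S₁ < x * a := by nlinarith
      have haS : a ∈ S₁ := mem_of_frob_lt h₁ ((mul_lt_mul_iff_right₀ (by omega)).mp hxa)
      exact ⟨a, haS, b, hbS, hza⟩
    refine le_antisymm (csSup_le ⟨M, hMnot⟩ ?_) (le_csSup ?_ hMnot)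
    · intro z hz
      by_contra hc
      exact hz (hMbig z (by omega))
    · exact ⟨M, fun z hz => by by_contra hc; exact hz (hMbig z (by omega))⟩
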